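/- Let f: ℝᵈ → ℝ be convex with minimizer x*, let C be a δ-approximate compressor, and assume stochastic gradients satisfy E[g_t | x_t] ∈ ∂f(x_t) (a subgradient in expectation) with E‖g_t‖² ≤ σ² and ‖∂f(x_t)‖ ≤ σ. Then the averaged iterate x̄_T = (1/(T+1))Σ_{t=0}^T x_t of EC-SGD with step-size γ > 0 satisfies E[f(x̄_T)] - f(x*) ≤ ‖x₀-x*‖²/(2γ(T+1)) + γσ²(1/2 + 2√(1-δ)/δ). -/

import Mathlib

open MeasureTheory

/-- Conditional expectation commutes with continuous linear maps. -/
theorem my_condexp_comp_clm {α E F : Type*}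
    [NormedAddCommGroup E] [NormedSpace ℝ E] [CompleteSpace E]
    [NormedAddCommGroup F] [NormedSpace ℝ F] [CompleteSpace F]
    {m m0 : MeasurableSpace α} (hm : m ≤ m0) {μ : Measure α} [IsFiniteMeasure μ]
    (L : E →L[ℝ] F) {f : α → E} (hf : Integrable f μ) :
    μ[(fun ω => L (f ω)) | m] =ᵐ[μ] fun ω => L ((μ[f | m]) ω) := by
  haveI : SigmaFinite (μ.trim hm) := by
    have : IsFiniteMeasure (μ.trim hm) := isFiniteMeasure_trim hm
    infer_instance
  refine (ae_eq_condExp_of_forall_setIntegral_eq hm (L.integrable_comp hf)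
    (fun s _ _ => (L.integrable_comp integrable_condExp).integrableOn)
    (fun s hs hμs => ?_) ?_).symm
  · calc ∫ ω in s, L ((μ[f | m]) ω) ∂μ
        = L (∫ ω in s, (μ[f | m]) ω ∂μ) :=
          L.integral_comp_comm integrable_condExp.integrableOn
      _ = L (∫ ω in s, f ω ∂μ) := by rw [setIntegral_condExp hm hf hs]
      _ = ∫ ω in s, L (f ω) ∂μ := (L.integral_comp_comm hf.integrableOn).symm
  · exact (L.continuous.comp_stronglyMeasurable stronglyMeasurable_condExp).aestronglyMeasurable

theorem my_integrable_inner {α E : Type*} [NormedAddCommGroup E] [InnerProductSpace ℝ E]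
    {m0 : MeasurableSpace α} {μ : Measure α} {u v : α → E}
    (hu : MemLp u 2 μ) (hv : MemLp v 2 μ) :
    Integrable (fun ω => (inner ℝ (u ω) (v ω) : ℝ)) μ := by
  have := L2.integrable_inner (𝕜 := ℝ) (hu.toLp u) (hv.toLp v)
  refine this.congr ?_
  filter_upwards [hu.coeFn_toLp, hv.coeFn_toLp] with ω h1 h2
  rw [h1, h2]

theorem my_integral_mul_le {α : Type*} {m0 : MeasurableSpace α} {μ : Measure α}
    [IsProbabilityMeasure μ] {u v : α → ℝ} {a b : ℝ}
    (hu0 : ∀ ω, 0 ≤ u ω) (hv0 : ∀ ω, 0 ≤ v ω)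
    (hu2 : Integrable (fun ω => u ω ^ 2) μ) (hv2 : Integrable (fun ω => v ω ^ 2) μ)
    (hum : AEStronglyMeasurable u μ) (hvm : AEStronglyMeasurable v μ)
    (ha : 0 ≤ a) (hb : 0 ≤ b)
    (hua : ∫ ω, u ω ^ 2 ∂μ ≤ a ^ 2) (hvb : ∫ ω, v ω ^ 2 ∂μ ≤ b ^ 2) :
    ∫ ω, u ω * v ω ∂μ ≤ a * b := by
  have huv : Integrable (fun ω => u ω * v ω) μ := by
    refine Integrable.mono' ((hu2.add hv2).div_const 2) (hum.mul hvm) ?_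
    filter_upwards with ω
    rw [Real.norm_eq_abs, abs_of_nonneg (mul_nonneg (hu0 ω) (hv0 ω))]
    simp only [Pi.add_apply]
    nlinarith [sq_nonneg (u ω - v ω)]
  rcases eq_or_lt_of_le ha with rfl | ha'
  · have h1 : ∫ ω, u ω ^ 2 ∂μ = 0 := le_antisymm (by simpa using hua)
      (integral_nonneg fun ω => sq_nonneg _)
    have h2 : ∀ᵐ ω ∂μ, u ω ^ 2 = 0 := by
      have := (integral_eq_zero_iff_of_nonneg (fun ω => sq_nonneg (u ω)) hu2).1 h1
      filter_upwards [this] with ω hω using hω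
    have : ∫ ω, u ω * v ω ∂μ = 0 := by
      rw [← integral_zero α ℝ (μ := μ)]
      refine integral_congr_ae ?_
      filter_upwards [h2] with ω hω
      have : u ω = 0 := by nlinarith
      simp [this]
    simp [this]
  rcases eq_or_lt_of_le hb with rfl | hb'
  · have h1 : ∫ ω, v ω ^ 2 ∂μ = 0 := le_antisymm (by simpa using hvb)
      (integral_nonneg fun ω => sq_nonneg _)
    have h2 : ∀ᵐ ω ∂μ, v ω ^ 2 = 0 := by
      have := (integral_eq_zero_iff_of_nonneg (fun ω => sq_nonneg (v ω)) hv2).1 h1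
      filter_upwards [this] with ω hω using hω
    have : ∫ ω, u ω * v ω ∂μ = 0 := by
      rw [← integral_zero α ℝ (μ := μ)]
      refine integral_congr_ae ?_
      filter_upwards [h2] with ω hω
      have : v ω = 0 := by nlinarith
      simp [this]
    simp [this]
  set c := b / a with hc
  have hcpos : 0 < c := div_pos hb' ha'
  have key : ∫ ω, u ω * v ω ∂μ ≤ ∫ ω, (c * u ω ^ 2 + v ω ^ 2 / c) / 2 ∂μ := by
    refine integral_mono huv (((hu2.const_mul c).add (hv2.div_const c)).div_const 2) ?_
    intro ω
    dsimp only
    have hkey : 0 ≤ (c * u ω - v ω) ^ 2 / c := div_nonneg (sq_nonneg _) hcpos.le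
    have hexp : (c * u ω - v ω) ^ 2 / c = c * u ω ^ 2 - 2 * (u ω * v ω) + v ω ^ 2 / c := by
      field_simp; ring
    linarith [hexp ▸ hkey]
  calc ∫ ω, u ω * v ω ∂μ ≤ ∫ ω, (c * u ω ^ 2 + v ω ^ 2 / c) / 2 ∂μ := key
    _ = (c * ∫ ω, u ω ^ 2 ∂μ + (∫ ω, v ω ^ 2 ∂μ) / c) / 2 := by
        rw [integral_div, integral_add (hu2.const_mul c) (hv2.div_const c),
          integral_const_mul, integral_div]
    _ ≤ (c * a ^ 2 + b ^ 2 / c) / 2 := by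
        have h1 : c * ∫ ω, u ω ^ 2 ∂μ ≤ c * a ^ 2 :=
          mul_le_mul_of_nonneg_left hua hcpos.le
        have h2 : (∫ ω, v ω ^ 2 ∂μ) / c ≤ b ^ 2 / c := by
          gcongr
        linarith
    _ = a * b := by rw [hc]; field_simp; ring

/-- Conditional expectation commutes with continuous linear maps. -/

theorem my_abs_coord_le_norm {d : ℕ} (u : EuclideanSpace ℝ (Fin d)) (i : Fin d) :
    |u i| ≤ ‖u‖ := by
  have h1 : |u i| ^ 2 ≤ ‖u‖ ^ 2 := by
    rw [EuclideanSpace.norm_eq, Real.sq_sqrt (Finset.sum_nonneg fun j _ => sq_nonneg _)]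
    calc |u i| ^ 2 = ‖u i‖ ^ 2 := by rw [Real.norm_eq_abs]
      _ ≤ ∑ j, ‖u j‖ ^ 2 := Finset.single_le_sum (f := fun j => ‖u j‖ ^ 2) (fun j _ => sq_nonneg _) (Finset.mem_univ i)
  calc |u i| = Real.sqrt (|u i| ^ 2) := (Real.sqrt_sq (abs_nonneg _)).symm
    _ ≤ Real.sqrt (‖u‖ ^ 2) := Real.sqrt_le_sqrt h1
    _ = ‖u‖ := Real.sqrt_sq (norm_nonneg _)

theorem my_integral_inner_condexp {α : Type*} {d : ℕ} [m0 : MeasurableSpace α]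
    {μ : Measure α} [IsProbabilityMeasure μ]
    {X G H : α → EuclideanSpace ℝ (Fin d)} (c : EuclideanSpace ℝ (Fin d))
    (hX : Measurable X) (hXi : Integrable X μ)
    (hG : Integrable G μ)
    (hGX : Integrable (fun ω => ‖G ω‖ * ‖X ω - c‖) μ)
    (hH : AEStronglyMeasurable H μ)
    {σ : ℝ} (hHb : ∀ ω, ‖H ω‖ ≤ σ)
    (hcond : μ[G | MeasurableSpace.comap X inferInstance] =ᵐ[μ] H) :
    ∫ ω, (inner ℝ (G ω) (X ω - c) : ℝ) ∂μ = ∫ ω, (inner ℝ (H ω) (X ω - c) : ℝ) ∂μ := by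
  set Y : α → EuclideanSpace ℝ (Fin d) := fun ω => X ω - c with hY_def
  have hYmeas : Measurable[m0] Y := hX.sub_const c
  have hYi : Integrable Y μ := hXi.sub (integrable_const c)
  -- coordinatewise integrabilities
  have hGi_int : ∀ i : Fin d, Integrable (fun ω => G ω i) μ := by
    intro i
    exact (EuclideanSpace.proj (𝕜 := ℝ) i).integrable_comp hG
  have hYGi_int : ∀ i : Fin d, Integrable (fun ω => Y ω i * G ω i) μ := by
    intro i
    refine Integrable.mono' hGX ?_ ?_
    · have hGi : AEStronglyMeasurable (fun ω => G ω i) μ := by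
        have := (EuclideanSpace.proj (𝕜 := ℝ) (i : Fin d)).continuous.comp_aestronglyMeasurable
          hG.aestronglyMeasurable
        simpa using this
      exact ((EuclideanSpace.proj (𝕜 := ℝ) i).continuous.measurable.comp hYmeas).aestronglyMeasurable.mul hGi
    · filter_upwards with ω
      rw [Real.norm_eq_abs, abs_mul]
      exact mul_le_mul (my_abs_coord_le_norm _ i) (my_abs_coord_le_norm _ i)
        (abs_nonneg _) (norm_nonneg _) |>.trans (by rw [mul_comm])
  have hYHi_int : ∀ i : Fin d, Integrable (fun ω => Y ω i * H ω i) μ := by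
    intro i
    refine Integrable.mono' (hYi.norm.const_mul σ) ?_ ?_
    · have hHi : AEStronglyMeasurable (fun ω => H ω i) μ := by
        have := (EuclideanSpace.proj (𝕜 := ℝ) (i : Fin d)).continuous.comp_aestronglyMeasurable hH
        simpa using this
      exact ((EuclideanSpace.proj (𝕜 := ℝ) i).continuous.measurable.comp hYmeas).aestronglyMeasurable.mul hHi
    · filter_upwards with ω
      rw [Real.norm_eq_abs, abs_mul]
      calc |Y ω i| * |H ω i| ≤ ‖Y ω‖ * ‖H ω‖ :=
            mul_le_mul (my_abs_coord_le_norm _ i) (my_abs_coord_le_norm _ i)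
              (abs_nonneg _) (norm_nonneg _)
        _ ≤ ‖Y ω‖ * σ := by
            exact mul_le_mul_of_nonneg_left (hHb ω) (norm_nonneg _)
        _ = σ * ‖Y ω‖ := mul_comm _ _
  set m := MeasurableSpace.comap X inferInstance with hm_def
  have hm : m ≤ m0 := hX.comap_le
  haveI : SigmaFinite (μ.trim hm) := by
    have : IsFiniteMeasure (μ.trim hm) := isFiniteMeasure_trim hm
    infer_instance
  have hXm : Measurable[m] X := fun s hs => ⟨s, hs, rfl⟩
  have hYm : ∀ i : Fin d, StronglyMeasurable[m] (fun ω => Y ω i) := by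
    intro i
    have h1 : Measurable[m] (fun ω => X ω i) := (EuclideanSpace.proj (𝕜 := ℝ) i).continuous.measurable.comp hXm
    have h2 : Measurable[m] (fun ω => X ω i - c i) := h1.sub_const (c i)
    exact h2.stronglyMeasurable
  -- coordinatewise condexp
  have hcond_i : ∀ i : Fin d, μ[(fun ω => G ω i) | m] =ᵐ[μ] fun ω => H ω i := by
    intro i
    have h1 := my_condexp_comp_clm hm (EuclideanSpace.proj (𝕜 := ℝ) (i : Fin d)) hG
    have h0 : (fun ω => (EuclideanSpace.proj (𝕜 := ℝ) (i : Fin d)) (G ω))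
        = fun ω => G ω i := by ext ω; simp
    rw [h0] at h1
    have h2 : (fun ω => (EuclideanSpace.proj (𝕜 := ℝ) (i : Fin d)) ((μ[G | m]) ω))
        =ᵐ[μ] fun ω => H ω i := by
      filter_upwards [hcond] with ω hω
      simp [hω]
    exact h1.trans h2
  have key_i : ∀ i : Fin d, ∫ ω, Y ω i * G ω i ∂μ = ∫ ω, Y ω i * H ω i ∂μ := by
    intro i
    have hmul := condExp_mul_of_stronglyMeasurable_left (μ := μ) (hYm i) (hYGi_int i) (hGi_int i)
    calc ∫ ω, Y ω i * G ω i ∂μ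
        = ∫ ω, (μ[(fun ω => Y ω i) * (fun ω => G ω i) | m]) ω ∂μ :=
          (integral_condExp hm).symm
      _ = ∫ ω, Y ω i * (μ[(fun ω => G ω i) | m]) ω ∂μ := by
          refine integral_congr_ae ?_
          filter_upwards [hmul] with ω hω
          simpa using hω
      _ = ∫ ω, Y ω i * H ω i ∂μ := by
          refine integral_congr_ae ?_
          filter_upwards [hcond_i i] with ω hω
          rw [hω]
  have expand : ∀ (u : α → EuclideanSpace ℝ (Fin d)) (ω : α),
      (inner ℝ (u ω) (Y ω) : ℝ) = ∑ i, Y ω i * u ω i := by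
    intro u ω
    rw [PiLp.inner_apply]
    exact Finset.sum_congr rfl fun i _ => by
      simp [RCLike.inner_apply, conj_trivial, mul_comm]
  calc ∫ ω, (inner ℝ (G ω) (X ω - c) : ℝ) ∂μ
      = ∫ ω, ∑ i, Y ω i * G ω i ∂μ := by
        refine integral_congr_ae (Filter.Eventually.of_forall fun ω => ?_)
        exact expand G ω
    _ = ∑ i, ∫ ω, Y ω i * G ω i ∂μ :=
        integral_finset_sum Finset.univ fun i _ => hYGi_int i
    _ = ∑ i, ∫ ω, Y ω i * H ω i ∂μ := Finset.sum_congr rfl fun i _ => key_i i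
    _ = ∫ ω, ∑ i, Y ω i * H ω i ∂μ :=
        (integral_finset_sum Finset.univ fun i _ => hYHi_int i).symm
    _ = ∫ ω, (inner ℝ (H ω) (X ω - c) : ℝ) ∂μ := by
        refine integral_congr_ae (Filter.Eventually.of_forall fun ω => ?_)
        exact (expand H ω).symm

theorem my_integrable_mul {α : Type*} {m0 : MeasurableSpace α} {μ : Measure α}
    {u v : α → ℝ} (hu : MemLp u 2 μ) (hv : MemLp v 2 μ) :
    Integrable (fun ω => u ω * v ω) μ := by
  refine (my_integrable_inner hu hv).congr ?_
  filter_upwards with ω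
  simp [RCLike.inner_apply, conj_trivial, mul_comm]

theorem my_alg1 {δ γ : ℝ} (hδ0 : 0 < δ) (hδlt : δ < 1) (A G2 : ℝ) :
    (1 - δ) * ((1 + δ/(2*(1-δ))) * A + (1 + 1/(δ/(2*(1-δ)))) * γ ^ 2 * G2)
      = (1 - δ/2) * A + ((1 - δ)*(2 - δ)/δ) * γ ^ 2 * G2 := by
  have h1 : δ ≠ 0 := hδ0.ne'
  have h2 : (1:ℝ) - δ ≠ 0 := by intro hc; rw [sub_eq_zero] at hc; exact absurd hc.symm hδlt.ne
  field_simp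
  ring

theorem my_alg2 {δ γ σ : ℝ} (hδ0 : 0 < δ) (hδlt : δ < 1) :
    4*(1-δ)*γ^2*σ^2/δ^2 - ((1 - δ/2) * (4*(1-δ)*γ^2*σ^2/δ^2)
      + ((1 - δ)*(2 - δ)/δ)*γ^2*σ^2) = (1-δ)*γ^2*σ^2 := by
  have h1 : δ ≠ 0 := hδ0.ne'
  field_simp
  ring

set_option maxHeartbeats 2000000 in
theorem ecsgd_nonsmooth_convex_convergence
    {d : ℕ} {Ω : Type*} [MeasurableSpace Ω] (μ : Measure Ω)
    [IsProbabilityMeasure μ]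
    (f : EuclideanSpace ℝ (Fin d) → ℝ)
    (hconv : ConvexOn ℝ Set.univ f)
    (xstar : EuclideanSpace ℝ (Fin d)) (hmin : ∀ x, f xstar ≤ f x)
    (h : EuclideanSpace ℝ (Fin d) → EuclideanSpace ℝ (Fin d))
    (hsubgrad : ∀ x y, f y ≥ f x + (inner ℝ (h x) (y - x) : ℝ))
    (δ : ℝ) (hδ0 : 0 < δ) (hδ1 : δ ≤ 1)
    (C : EuclideanSpace ℝ (Fin d) → EuclideanSpace ℝ (Fin d))
    (hC : ∀ v, ‖C v - v‖ ^ 2 ≤ (1 - δ) * ‖v‖ ^ 2)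
    (σ : ℝ) (hσ : 0 ≤ σ)
    (γ : ℝ) (hγ : 0 < γ) (T : ℕ)
    (x g e : ℕ → Ω → EuclideanSpace ℝ (Fin d))
    (x0 : EuclideanSpace ℝ (Fin d)) (hx0 : ∀ ω, x 0 ω = x0)
    (he0 : ∀ ω, e 0 ω = 0)
    (hstep : ∀ t ω, x (t + 1) ω = x t ω - C (γ • g t ω + e t ω))
    (herr : ∀ t ω, e (t + 1) ω = (γ • g t ω + e t ω) - C (γ • g t ω + e t ω))
    (hmeas : ∀ t, Measurable (x t)) (hgmeas : ∀ t, Measurable (g t))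
    (hgint : ∀ t, Integrable (g t) μ)
    (hgint2 : ∀ t, Integrable (fun ω => ‖g t ω‖ ^ 2) μ)
    (hfint : Integrable (fun ω =>
        f ((1 / ((T : ℝ) + 1)) • ∑ t ∈ Finset.range (T + 1), x t ω)) μ)
    (hunbiased : ∀ t,
      μ[g t | MeasurableSpace.comap (x t) (by infer_instance)]
        =ᵐ[μ] fun ω => h (x t ω))
    (hvar : ∀ t, ∫ ω, ‖g t ω‖ ^ 2 ∂μ ≤ σ ^ 2)
    (hsubgradbound : ∀ t ω, ‖h (x t ω)‖ ≤ σ) :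
    (∫ ω, f ((1 / ((T : ℝ) + 1)) • ∑ t ∈ Finset.range (T + 1), x t ω) ∂μ)
        - f xstar
      ≤ ‖x0 - xstar‖ ^ 2 / (2 * γ * (T + 1))
        + γ * σ ^ 2 * (1 / 2 + 2 * Real.sqrt (1 - δ) / δ) := by
  classical
  have h1δ : (0:ℝ) ≤ 1 - δ := by linarith
  -- virtual iterate
  set y : ℕ → Ω → EuclideanSpace ℝ (Fin d) := fun t ω => x t ω - e t ω with hy_def
  have hyrec : ∀ t ω, y (t + 1) ω = y t ω - γ • g t ω := by
    intro t ω
    have hc : C (γ • g t ω + e t ω) = x t ω - x (t + 1) ω := by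
      rw [hstep t ω]; abel
    show x (t + 1) ω - e (t + 1) ω = x t ω - e t ω - γ • g t ω
    rw [hstep t ω, herr t ω, hc]
    abel
  -- measurability of the error sequence
  have hemeas : ∀ t, Measurable (e t) := by
    intro t
    induction t with
    | zero =>
      have : e 0 = fun _ => (0 : EuclideanSpace ℝ (Fin d)) := funext he0
      rw [this]; exact measurable_const
    | succ t ih =>
      have : e (t + 1) = fun ω => (γ • g t ω + e t ω) - (x t ω - x (t + 1) ω) := by
        funext ω
        have hc : C (γ • g t ω + e t ω) = x t ω - x (t + 1) ω := by
          rw [hstep t ω]; abel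
        rw [herr t ω, hc]
      rw [this]
      exact (((hgmeas t).const_smul γ).add ih).sub ((hmeas t).sub (hmeas (t + 1)))
  -- L² bounds
  have hgL2 : ∀ t, MemLp (g t) 2 μ := fun t =>
    (memLp_two_iff_integrable_sq_norm (hgmeas t).aestronglyMeasurable).2 (hgint2 t)
  have hpL2 : ∀ t, MemLp (e t) 2 μ → MemLp (fun ω => γ • g t ω + e t ω) 2 μ := fun t ih =>
    ((hgL2 t).const_smul γ).add ih
  have hebound : ∀ t ω, ‖e (t + 1) ω‖ ≤ ‖γ • g t ω + e t ω‖ := by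
    intro t ω
    have h2 := hC (γ • g t ω + e t ω)
    have h3 : ‖e (t + 1) ω‖ ^ 2 ≤ ‖γ • g t ω + e t ω‖ ^ 2 := by
      rw [herr t ω, norm_sub_rev]
      nlinarith [sq_nonneg ‖γ • g t ω + e t ω‖, hδ0]
    calc ‖e (t + 1) ω‖ = Real.sqrt (‖e (t + 1) ω‖ ^ 2) := (Real.sqrt_sq (norm_nonneg _)).symm
      _ ≤ Real.sqrt (‖γ • g t ω + e t ω‖ ^ 2) := Real.sqrt_le_sqrt h3
      _ = _ := Real.sqrt_sq (norm_nonneg _)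
  have heL2 : ∀ t, MemLp (e t) 2 μ := by
    intro t
    induction t with
    | zero =>
      have : e 0 = fun _ => (0 : EuclideanSpace ℝ (Fin d)) := funext he0
      rw [this]; exact memLp_const 0
    | succ t ih =>
      refine MemLp.of_le (hpL2 t ih) (hemeas (t + 1)).aestronglyMeasurable ?_
      filter_upwards with ω
      exact hebound t ω
  have hxL2 : ∀ t, MemLp (x t) 2 μ := by
    intro t
    induction t with
    | zero =>
      have : x 0 = fun _ => x0 := funext hx0
      rw [this]; exact memLp_const x0
    | succ t ih =>
      have hx1 : x (t + 1) = fun ω => x t ω - (γ • g t ω + e t ω) + e (t + 1) ω := by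
        funext ω
        rw [hstep t ω, herr t ω]
        abel
      rw [hx1]
      exact (ih.sub (hpL2 t (heL2 t))).add (heL2 (t + 1))
  have he2int : ∀ t, Integrable (fun ω => ‖e t ω‖ ^ 2) μ := fun t =>
    (memLp_two_iff_integrable_sq_norm (hemeas t).aestronglyMeasurable).1 (heL2 t)
  -- the error bound
  set B := 4 * (1 - δ) * γ ^ 2 * σ ^ 2 / δ ^ 2 with hB_def
  have hB0 : (0:ℝ) ≤ B := by
    apply div_nonneg _ (sq_nonneg δ)
    positivity
  have herrbound : ∀ t, ∫ ω, ‖e t ω‖ ^ 2 ∂μ ≤ B := by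
    intro t
    induction t with
    | zero =>
      have : (fun ω => ‖e 0 ω‖ ^ 2) = fun _ => (0:ℝ) := by
        funext ω; rw [he0 ω]; simp
      rw [this, integral_zero]; exact hB0
    | succ t ih =>
      have hp2int : Integrable (fun ω => ‖γ • g t ω + e t ω‖ ^ 2) μ :=
        (memLp_two_iff_integrable_sq_norm
          (((hgmeas t).const_smul γ).add (hemeas t)).aestronglyMeasurable).1
          (hpL2 t (heL2 t))
      have step1 : ∫ ω, ‖e (t + 1) ω‖ ^ 2 ∂μ
          ≤ (1 - δ) * ∫ ω, ‖γ • g t ω + e t ω‖ ^ 2 ∂μ := by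
        rw [← integral_const_mul]
        refine integral_mono (he2int _) (hp2int.const_mul _) ?_
        intro ω
        dsimp only
        have h2 := hC (γ • g t ω + e t ω)
        have h3 : e (t + 1) ω = -(C (γ • g t ω + e t ω) - (γ • g t ω + e t ω)) := by
          rw [herr t ω]; abel
        rw [h3, norm_neg]
        exact h2
      by_cases hδeq : δ = 1
      · have : (1 - δ) * ∫ ω, ‖γ • g t ω + e t ω‖ ^ 2 ∂μ = 0 := by
          rw [hδeq]; ring
        rw [this] at step1
        exact step1.trans hB0
      have hδlt : δ < 1 := lt_of_le_of_ne hδ1 hδeq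
      have h1δ' : (0:ℝ) < 1 - δ := by linarith
      set β := δ / (2 * (1 - δ)) with hβ_def
      have hβpos : 0 < β := div_pos hδ0 (by linarith)
      have hpw : ∀ ω, ‖γ • g t ω + e t ω‖ ^ 2
          ≤ (1 + β) * ‖e t ω‖ ^ 2 + (1 + 1/β) * γ ^ 2 * ‖g t ω‖ ^ 2 := by
        intro ω
        have htri : ‖γ • g t ω + e t ω‖ ≤ γ * ‖g t ω‖ + ‖e t ω‖ := by
          calc ‖γ • g t ω + e t ω‖ ≤ ‖γ • g t ω‖ + ‖e t ω‖ := norm_add_le _ _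
            _ = γ * ‖g t ω‖ + ‖e t ω‖ := by rw [norm_smul, Real.norm_eq_abs, abs_of_pos hγ]
        have hsq : ‖γ • g t ω + e t ω‖ ^ 2 ≤ (γ * ‖g t ω‖ + ‖e t ω‖) ^ 2 := by
          apply pow_le_pow_left₀ (norm_nonneg _) htri
        refine hsq.trans ?_
        have hβ1 : 1 / β = 2 * (1 - δ) / δ := by
          rw [hβ_def]; field_simp
        have hkey : 0 ≤ (β * ‖e t ω‖ - γ * ‖g t ω‖) ^ 2 / β :=
          div_nonneg (sq_nonneg _) hβpos.le
        have hexp : (β * ‖e t ω‖ - γ * ‖g t ω‖) ^ 2 / β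
            = β * ‖e t ω‖ ^ 2 - 2 * (γ * ‖g t ω‖) * ‖e t ω‖ + 1/β * (γ ^ 2 * ‖g t ω‖ ^ 2) := by
          field_simp; ring
        have h5 : 0 ≤ β * ‖e t ω‖ ^ 2 - 2 * (γ * ‖g t ω‖) * ‖e t ω‖ + 1/β * (γ ^ 2 * ‖g t ω‖ ^ 2) :=
          hexp ▸ hkey
        nlinarith [h5]
      have step2 : ∫ ω, ‖γ • g t ω + e t ω‖ ^ 2 ∂μ
          ≤ (1 + β) * (∫ ω, ‖e t ω‖ ^ 2 ∂μ) + (1 + 1/β) * γ ^ 2 * (∫ ω, ‖g t ω‖ ^ 2 ∂μ) := by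
        calc ∫ ω, ‖γ • g t ω + e t ω‖ ^ 2 ∂μ
            ≤ ∫ ω, ((1 + β) * ‖e t ω‖ ^ 2 + (1 + 1/β) * γ ^ 2 * ‖g t ω‖ ^ 2) ∂μ :=
              integral_mono hp2int (((he2int t).const_mul _).add ((hgint2 t).const_mul _)) hpw
          _ = _ := by
              rw [integral_add ((he2int t).const_mul _) ((hgint2 t).const_mul _),
                integral_const_mul, integral_const_mul]
      have hA0 : 0 ≤ ∫ ω, ‖e t ω‖ ^ 2 ∂μ := integral_nonneg fun ω => sq_nonneg _
      have hG0 : 0 ≤ ∫ ω, ‖g t ω‖ ^ 2 ∂μ := integral_nonneg fun ω => sq_nonneg _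
      have heq : (1 - δ) * ((1 + β) * (∫ ω, ‖e t ω‖ ^ 2 ∂μ)
            + (1 + 1/β) * γ ^ 2 * (∫ ω, ‖g t ω‖ ^ 2 ∂μ))
          = (1 - δ/2) * (∫ ω, ‖e t ω‖ ^ 2 ∂μ)
            + ((1 - δ) * (2 - δ) / δ) * γ ^ 2 * (∫ ω, ‖g t ω‖ ^ 2 ∂μ) := by
        rw [hβ_def]
        exact my_alg1 hδ0 hδlt _ _
      have hcoef1 : (0:ℝ) ≤ 1 - δ/2 := by linarith
      have hcoef2 : (0:ℝ) ≤ (1 - δ) * (2 - δ) / δ := by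
        apply div_nonneg _ hδ0.le
        nlinarith
      have hfinal : (1 - δ/2) * (∫ ω, ‖e t ω‖ ^ 2 ∂μ)
            + ((1 - δ) * (2 - δ) / δ) * γ ^ 2 * (∫ ω, ‖g t ω‖ ^ 2 ∂μ) ≤ B := by
        have h7 : (1 - δ/2) * (∫ ω, ‖e t ω‖ ^ 2 ∂μ) ≤ (1 - δ/2) * B :=
          mul_le_mul_of_nonneg_left ih hcoef1
        have h8 : ((1 - δ) * (2 - δ) / δ) * γ ^ 2 * (∫ ω, ‖g t ω‖ ^ 2 ∂μ)
            ≤ ((1 - δ) * (2 - δ) / δ) * γ ^ 2 * σ ^ 2 :=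
          mul_le_mul_of_nonneg_left (hvar t) (mul_nonneg hcoef2 (sq_nonneg γ))
        have h9 : B - ((1 - δ/2) * B + ((1 - δ) * (2 - δ) / δ) * γ ^ 2 * σ ^ 2)
            = (1 - δ) * γ ^ 2 * σ ^ 2 := by
          rw [hB_def]
          exact my_alg2 hδ0 hδlt
        have h10 : 0 ≤ (1 - δ) * γ ^ 2 * σ ^ 2 := by positivity
        linarith
      calc ∫ ω, ‖e (t + 1) ω‖ ^ 2 ∂μ
          ≤ (1 - δ) * ∫ ω, ‖γ • g t ω + e t ω‖ ^ 2 ∂μ := step1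
        _ ≤ (1 - δ) * ((1 + β) * (∫ ω, ‖e t ω‖ ^ 2 ∂μ)
              + (1 + 1/β) * γ ^ 2 * (∫ ω, ‖g t ω‖ ^ 2 ∂μ)) :=
            mul_le_mul_of_nonneg_left step2 h1δ
        _ = _ := heq
        _ ≤ B := hfinal
  -- basic integrabilities
  have hL2toInt : ∀ {u : Ω → EuclideanSpace ℝ (Fin d)}, MemLp u 2 μ → Integrable u μ :=
    fun hu => hu.integrable one_le_two
  have hxsL2 : ∀ t, MemLp (fun ω => x t ω - xstar) 2 μ := fun t =>
    (hxL2 t).sub (memLp_const xstar)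
  have hyL2 : ∀ t, MemLp (fun ω => y t ω - xstar) 2 μ := fun t =>
    ((hxL2 t).sub (heL2 t)).sub (memLp_const xstar)
  set R : ℕ → ℝ := fun t => ∫ ω, ‖y t ω - xstar‖ ^ 2 ∂μ with hR_def
  have hyint2 : ∀ t, Integrable (fun ω => ‖y t ω - xstar‖ ^ 2) μ := fun t =>
    (memLp_two_iff_integrable_sq_norm
      (((hmeas t).sub (hemeas t)).sub_const xstar).aestronglyMeasurable).1 (hyL2 t)
  have hinner_gy : ∀ t, Integrable (fun ω => (inner ℝ (g t ω) (y t ω - xstar) : ℝ)) μ := fun t =>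
    my_integrable_inner (hgL2 t) (hyL2 t)
  have hinner_gx : ∀ t, Integrable (fun ω => (inner ℝ (g t ω) (x t ω - xstar) : ℝ)) μ := fun t =>
    my_integrable_inner (hgL2 t) (hxsL2 t)
  have hinner_ge : ∀ t, Integrable (fun ω => (inner ℝ (g t ω) (e t ω) : ℝ)) μ := fun t =>
    my_integrable_inner (hgL2 t) (heL2 t)
  -- one-step expansion of the virtual iterate distance
  have hRrec : ∀ t, R (t + 1) = R t
      - 2 * γ * (∫ ω, (inner ℝ (g t ω) (y t ω - xstar) : ℝ) ∂μ)
      + γ ^ 2 * ∫ ω, ‖g t ω‖ ^ 2 ∂μ := by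
    intro t
    have hpt : ∀ ω, ‖y (t + 1) ω - xstar‖ ^ 2
        = ‖y t ω - xstar‖ ^ 2 - 2 * γ * (inner ℝ (g t ω) (y t ω - xstar) : ℝ)
          + γ ^ 2 * ‖g t ω‖ ^ 2 := by
      intro ω
      rw [hyrec t ω]
      have h0 : y t ω - γ • g t ω - xstar = (y t ω - xstar) - γ • g t ω := by abel
      rw [h0, norm_sub_sq_real, real_inner_smul_right, real_inner_comm, norm_smul,
        Real.norm_eq_abs, mul_pow, sq_abs]
      ring
    have := integral_congr_ae (μ := μ) (Filter.Eventually.of_forall hpt)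
    calc R (t + 1) = ∫ ω, (‖y t ω - xstar‖ ^ 2
          - 2 * γ * (inner ℝ (g t ω) (y t ω - xstar) : ℝ) + γ ^ 2 * ‖g t ω‖ ^ 2) ∂μ := this
      _ = _ := by
          have e1 : ∫ ω, (‖y t ω - xstar‖ ^ 2
                - 2 * γ * (inner ℝ (g t ω) (y t ω - xstar) : ℝ) + γ ^ 2 * ‖g t ω‖ ^ 2) ∂μ
              = (∫ ω, (‖y t ω - xstar‖ ^ 2
                  - 2 * γ * (inner ℝ (g t ω) (y t ω - xstar) : ℝ)) ∂μ)
                + ∫ ω, γ ^ 2 * ‖g t ω‖ ^ 2 ∂μ :=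
            integral_add ((hyint2 t).sub ((hinner_gy t).const_mul _)) ((hgint2 t).const_mul _)
          have e2 : ∫ ω, (‖y t ω - xstar‖ ^ 2
                - 2 * γ * (inner ℝ (g t ω) (y t ω - xstar) : ℝ)) ∂μ
              = (∫ ω, ‖y t ω - xstar‖ ^ 2 ∂μ)
                - ∫ ω, 2 * γ * (inner ℝ (g t ω) (y t ω - xstar) : ℝ) ∂μ :=
            integral_sub (hyint2 t) ((hinner_gy t).const_mul _)
          rw [e1, e2, integral_const_mul, integral_const_mul]
  have hsplit : ∀ t, ∫ ω, (inner ℝ (g t ω) (y t ω - xstar) : ℝ) ∂μ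
      = ∫ ω, (inner ℝ (g t ω) (x t ω - xstar) : ℝ) ∂μ
        - ∫ ω, (inner ℝ (g t ω) (e t ω) : ℝ) ∂μ := by
    intro t
    rw [← integral_sub (hinner_gx t) (hinner_ge t)]
    refine integral_congr_ae (Filter.Eventually.of_forall fun ω => ?_)
    show (inner ℝ (g t ω) (y t ω - xstar) : ℝ)
      = (inner ℝ (g t ω) (x t ω - xstar) : ℝ) - (inner ℝ (g t ω) (e t ω) : ℝ)
    have h0 : y t ω - xstar = (x t ω - xstar) - e t ω := by
      show (x t ω - e t ω) - xstar = _
      abel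
    rw [h0, inner_sub_right]
  -- measurability of the subgradient process
  have hHmeas : ∀ t, AEStronglyMeasurable (fun ω => h (x t ω)) μ := by
    intro t
    exact ((stronglyMeasurable_condExp.mono (hmeas t).comap_le).aestronglyMeasurable).congr
      (hunbiased t)
  -- replace the stochastic gradient by its conditional expectation
  have hswap : ∀ t, ∫ ω, (inner ℝ (g t ω) (x t ω - xstar) : ℝ) ∂μ
      = ∫ ω, (inner ℝ (h (x t ω)) (x t ω - xstar) : ℝ) ∂μ := by
    intro t
    exact my_integral_inner_condexp xstar (hmeas t) (hL2toInt (hxL2 t)) (hgint t)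
      (my_integrable_mul (hgL2 t).norm (hxsL2 t).norm) (hHmeas t) (hsubgradbound t)
      (hunbiased t)
  -- integrability of f ∘ x_t
  have hcont : Continuous f := by
    rw [← continuousOn_univ]
    exact hconv.continuousOn isOpen_univ
  have hfx_ub : ∀ t ω, f (x t ω) ≤ f xstar + σ * ‖x t ω - xstar‖ := by
    intro t ω
    have h1 := hsubgrad (x t ω) xstar
    have h3 := abs_real_inner_le_norm (h (x t ω)) (xstar - x t ω)
    have h4 : ‖xstar - x t ω‖ = ‖x t ω - xstar‖ := norm_sub_rev _ _
    have h5 := hsubgradbound t ω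
    have h6 := neg_abs_le (inner ℝ (h (x t ω)) (xstar - x t ω) : ℝ)
    have h7 : ‖h (x t ω)‖ * ‖xstar - x t ω‖ ≤ σ * ‖x t ω - xstar‖ := by
      rw [h4]
      exact mul_le_mul_of_nonneg_right h5 (norm_nonneg _)
    linarith
  have hfxint : ∀ t, Integrable (fun ω => f (x t ω)) μ := by
    intro t
    refine Integrable.mono' ((integrable_const |f xstar|).add
      ((hL2toInt (hxsL2 t)).norm.const_mul σ))
      (hcont.comp_aestronglyMeasurable (hmeas t).aestronglyMeasurable) ?_
    filter_upwards with ω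
    rw [Real.norm_eq_abs, abs_le]
    have hnn : 0 ≤ σ * ‖x t ω - xstar‖ := mul_nonneg hσ (norm_nonneg _)
    constructor
    · have h1 := hmin (x t ω)
      have h2 := neg_abs_le (f xstar)
      dsimp only [Pi.add_apply]
      linarith
    · have h1 := hfx_ub t ω
      have h2 := le_abs_self (f xstar)
      dsimp only [Pi.add_apply]
      linarith
  have hinner_hx_int : ∀ t, Integrable (fun ω => (inner ℝ (h (x t ω)) (x t ω - xstar) : ℝ)) μ := by
    intro t
    refine Integrable.mono' ((hL2toInt (hxsL2 t)).norm.const_mul σ)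
      ((hHmeas t).inner (((hmeas t).sub_const xstar).aestronglyMeasurable)) ?_
    filter_upwards with ω
    rw [Real.norm_eq_abs]
    calc |(inner ℝ (h (x t ω)) (x t ω - xstar) : ℝ)|
        ≤ ‖h (x t ω)‖ * ‖x t ω - xstar‖ := abs_real_inner_le_norm _ _
      _ ≤ σ * ‖x t ω - xstar‖ :=
          mul_le_mul_of_nonneg_right (hsubgradbound t ω) (norm_nonneg _)
  -- convexity lower bound
  have hlower : ∀ t, (∫ ω, f (x t ω) ∂μ) - f xstar
      ≤ ∫ ω, (inner ℝ (h (x t ω)) (x t ω - xstar) : ℝ) ∂μ := by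
    intro t
    have heq0 : (∫ ω, f (x t ω) ∂μ) - f xstar = ∫ ω, (f (x t ω) - f xstar) ∂μ := by
      rw [integral_sub (hfxint t) (integrable_const _), integral_const]
      simp
    rw [heq0]
    refine integral_mono ((hfxint t).sub (integrable_const _)) (hinner_hx_int t) ?_
    intro ω
    have h1 := hsubgrad (x t ω) xstar
    have h2 : (inner ℝ (h (x t ω)) (xstar - x t ω) : ℝ)
        = -(inner ℝ (h (x t ω)) (x t ω - xstar) : ℝ) := by
      rw [← inner_neg_right]
      congr 1
      abel
    rw [h2] at h1
    dsimp only
    linarith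
  -- bound for the error inner product term
  have hge_bound : ∀ t, ∫ ω, (inner ℝ (g t ω) (e t ω) : ℝ) ∂μ ≤ σ * Real.sqrt B := by
    intro t
    calc ∫ ω, (inner ℝ (g t ω) (e t ω) : ℝ) ∂μ
        ≤ ∫ ω, ‖g t ω‖ * ‖e t ω‖ ∂μ :=
          integral_mono (hinner_ge t) (my_integrable_mul (hgL2 t).norm (heL2 t).norm)
            (fun ω => real_inner_le_norm _ _)
      _ ≤ σ * Real.sqrt B :=
          my_integral_mul_le (fun ω => norm_nonneg _) (fun ω => norm_nonneg _)
            (hgint2 t) (he2int t) (hgmeas t).norm.aestronglyMeasurable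
            (hemeas t).norm.aestronglyMeasurable hσ (Real.sqrt_nonneg B) (hvar t)
            (by rw [Real.sq_sqrt hB0]; exact herrbound t)
  -- one-step descent
  have hdescent : ∀ t, 2 * γ * ((∫ ω, f (x t ω) ∂μ) - f xstar)
      ≤ R t - R (t + 1) + γ ^ 2 * σ ^ 2 + 2 * γ * (σ * Real.sqrt B) := by
    intro t
    have hrearr : R t - R (t + 1)
        = 2 * γ * ((∫ ω, (inner ℝ (h (x t ω)) (x t ω - xstar) : ℝ) ∂μ)
            - ∫ ω, (inner ℝ (g t ω) (e t ω) : ℝ) ∂μ)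
          - γ ^ 2 * ∫ ω, ‖g t ω‖ ^ 2 ∂μ := by
      rw [hRrec t, hsplit t, hswap t]
      ring
    have h7 : 2 * γ * ((∫ ω, f (x t ω) ∂μ) - f xstar)
        ≤ 2 * γ * (∫ ω, (inner ℝ (h (x t ω)) (x t ω - xstar) : ℝ) ∂μ) :=
      mul_le_mul_of_nonneg_left (hlower t) (by positivity)
    have h8 : 2 * γ * (∫ ω, (inner ℝ (g t ω) (e t ω) : ℝ) ∂μ) ≤ 2 * γ * (σ * Real.sqrt B) :=
      mul_le_mul_of_nonneg_left (hge_bound t) (by positivity)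
    have h9 : γ ^ 2 * (∫ ω, ‖g t ω‖ ^ 2 ∂μ) ≤ γ ^ 2 * σ ^ 2 :=
      mul_le_mul_of_nonneg_left (hvar t) (sq_nonneg γ)
    nlinarith [hrearr, h7, h8, h9]
  -- sum over the steps
  set N : ℝ := (T : ℝ) + 1 with hN_def
  have hN0 : (0:ℝ) < N := by positivity
  set F : ℕ → ℝ := fun t => ∫ ω, f (x t ω) ∂μ with hF_def
  have hR0 : R 0 = ‖x0 - xstar‖ ^ 2 := by
    have h0 : (fun ω => ‖y 0 ω - xstar‖ ^ 2) = fun _ => ‖x0 - xstar‖ ^ 2 := by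
      funext ω
      have : y 0 ω = x0 := by
        show x 0 ω - e 0 ω = x0
        rw [hx0 ω, he0 ω, sub_zero]
      rw [this]
    show ∫ ω, ‖y 0 ω - xstar‖ ^ 2 ∂μ = ‖x0 - xstar‖ ^ 2
    rw [h0, integral_const]
    simp
  have hRT : 0 ≤ R (T + 1) := integral_nonneg fun ω => sq_nonneg _
  have hsum : 2 * γ * ((∑ t ∈ Finset.range (T + 1), F t) - N * f xstar)
      ≤ ‖x0 - xstar‖ ^ 2 + N * (γ ^ 2 * σ ^ 2 + 2 * γ * (σ * Real.sqrt B)) := by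
    have h1 : ∀ t ∈ Finset.range (T + 1), 2 * γ * (F t - f xstar)
        ≤ (R t - R (t + 1)) + (γ ^ 2 * σ ^ 2 + 2 * γ * (σ * Real.sqrt B)) := fun t _ => by
      have := hdescent t
      simp only [hF_def]
      linarith
    have h2 := Finset.sum_le_sum h1
    rw [Finset.sum_add_distrib, Finset.sum_range_sub' R, Finset.sum_const,
      Finset.card_range] at h2
    have h3 : ∑ t ∈ Finset.range (T + 1), 2 * γ * (F t - f xstar)
        = 2 * γ * ((∑ t ∈ Finset.range (T + 1), F t) - N * f xstar) := by
      rw [← Finset.mul_sum, Finset.sum_sub_distrib, Finset.sum_const, Finset.card_range,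
        nsmul_eq_mul, hN_def]
      push_cast
      ring
    rw [h3] at h2
    have h4 : ((T + 1 : ℕ) : ℝ) = N := by rw [hN_def]; push_cast; ring
    rw [nsmul_eq_mul] at h2
    rw [h4] at h2
    linarith [h2, hRT, hR0.symm ▸ le_refl (R 0)]
  -- Jensen's inequality
  have hjensen : (∫ ω, f ((1 / N) • ∑ t ∈ Finset.range (T + 1), x t ω) ∂μ)
      ≤ (1 / N) * ∑ t ∈ Finset.range (T + 1), F t := by
    have hpt : ∀ ω, f ((1 / N) • ∑ t ∈ Finset.range (T + 1), x t ω)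
        ≤ ∑ t ∈ Finset.range (T + 1), (1 / N) * f (x t ω) := by
      intro ω
      have hw : ∑ _t ∈ Finset.range (T + 1), (1:ℝ) / N = 1 := by
        rw [Finset.sum_const, Finset.card_range, nsmul_eq_mul]
        have h4 : ((T + 1 : ℕ) : ℝ) = N := by rw [hN_def]; push_cast; ring
        rw [h4]
        field_simp
      have := hconv.map_sum_le (t := Finset.range (T + 1)) (w := fun _ => 1 / N)
        (p := fun t => x t ω) (fun i _ => by positivity) hw (fun i _ => Set.mem_univ _)
      rw [Finset.smul_sum]
      simpa [smul_eq_mul] using this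
    calc (∫ ω, f ((1 / N) • ∑ t ∈ Finset.range (T + 1), x t ω) ∂μ)
        ≤ ∫ ω, ∑ t ∈ Finset.range (T + 1), (1 / N) * f (x t ω) ∂μ :=
          integral_mono hfint
            (integrable_finset_sum _ fun t _ => (hfxint t).const_mul _) hpt
      _ = ∑ t ∈ Finset.range (T + 1), (1 / N) * F t := by
          rw [integral_finset_sum _ fun t _ => (hfxint t).const_mul _]
          exact Finset.sum_congr rfl fun t _ => integral_const_mul _ _
      _ = (1 / N) * ∑ t ∈ Finset.range (T + 1), F t := by rw [Finset.mul_sum]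
  -- value of sqrt B
  have hsqrtB : Real.sqrt B = 2 * γ * σ * Real.sqrt (1 - δ) / δ := by
    have hval : B = (2 * γ * σ * Real.sqrt (1 - δ) / δ) ^ 2 := by
      rw [hB_def, div_pow, mul_pow, mul_pow, mul_pow, Real.sq_sqrt h1δ]
      ring
    rw [hval, Real.sqrt_sq (by positivity)]
  -- final assembly
  set S := ∑ t ∈ Finset.range (T + 1), F t with hS_def
  have hdiv : S / N - f xstar ≤ ‖x0 - xstar‖ ^ 2 / (2 * γ * N)
      + (γ ^ 2 * σ ^ 2 + 2 * γ * (σ * Real.sqrt B)) / (2 * γ) := by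
    have h1 : S - N * f xstar
        ≤ (‖x0 - xstar‖ ^ 2 + N * (γ ^ 2 * σ ^ 2 + 2 * γ * (σ * Real.sqrt B))) / (2 * γ) := by
      rw [le_div_iff₀ (by positivity)]
      nlinarith [hsum]
    have h2 : S / N - f xstar = (S - N * f xstar) / N := by field_simp
    rw [h2]
    calc (S - N * f xstar) / N
        ≤ ((‖x0 - xstar‖ ^ 2 + N * (γ ^ 2 * σ ^ 2 + 2 * γ * (σ * Real.sqrt B))) / (2 * γ)) / N :=
          (div_le_div_iff_of_pos_right hN0).2 h1
      _ = ‖x0 - xstar‖ ^ 2 / (2 * γ * N)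
          + (γ ^ 2 * σ ^ 2 + 2 * γ * (σ * Real.sqrt B)) / (2 * γ) := by
          field_simp
  have hlast : (γ ^ 2 * σ ^ 2 + 2 * γ * (σ * Real.sqrt B)) / (2 * γ)
      = γ * σ ^ 2 * (1 / 2 + 2 * Real.sqrt (1 - δ) / δ) := by
    rw [hsqrtB]
    field_simp
  calc (∫ ω, f ((1 / N) • ∑ t ∈ Finset.range (T + 1), x t ω) ∂μ) - f xstar
      ≤ S / N - f xstar := by
        have hSN : S / N = 1 / N * S := by ring
        linarith [hjensen, hSN]
    _ ≤ ‖x0 - xstar‖ ^ 2 / (2 * γ * N)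
        + (γ ^ 2 * σ ^ 2 + 2 * γ * (σ * Real.sqrt B)) / (2 * γ) := hdiv
    _ = ‖x0 - xstar‖ ^ 2 / (2 * γ * N)
        + γ * σ ^ 2 * (1 / 2 + 2 * Real.sqrt (1 - δ) / δ) := by rw [hlast]
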